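/- arXiv:1208.6240 — 4 statements merged into one kernel-verified Lean document; each statement's English description precedes it below -/
import Mathlib

section
/- On the elliptic curve E over ℚ(s) given by y² + (s²-6s+1)xy = x(x - s⁴)(x + s² - 6s³), the point P = (s²(6s-1), 0) has order exactly 6, and the point (0,0) has order exactly 2. -/
open WeierstrassCurve

/-- The elliptic surface `Y₆` around `s = 0`:
`y² + (s²-6s+1)xy = x(x - s⁴)(x + s² - 6s³)` over `ℚ(s)`. -/
noncomputable def W6 : WeierstrassCurve.Affine (RatFunc ℚ) where
  a₁ := RatFunc.X ^ 2 - 6 * RatFunc.X + 1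
  a₂ := RatFunc.X ^ 2 - 6 * RatFunc.X ^ 3 - RatFunc.X ^ 4
  a₃ := 0
  a₄ := -RatFunc.X ^ 6 + 6 * RatFunc.X ^ 7
  a₆ := 0

private lemma some_eq_some {F : Type*} [Field F] {W : WeierstrassCurve.Affine F}
    {x₁ y₁ x₂ y₂ : F} (h₁ : W.Nonsingular x₁ y₁) (h₂ : W.Nonsingular x₂ y₂)
    (hx : x₁ = x₂) (hy : y₁ = y₂) :
    WeierstrassCurve.Affine.Point.some _ _ h₁ = WeierstrassCurve.Affine.Point.some _ _ h₂ := by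
  subst hx; subst hy; rfl

private lemma rf_ne (p : Polynomial ℚ) (hp : p ≠ 0) :
    algebraMap (Polynomial ℚ) (RatFunc ℚ) p ≠ 0 :=
  RatFunc.algebraMap_ne_zero hp

private lemma hX : (RatFunc.X : RatFunc ℚ) ≠ 0 := RatFunc.X_ne_zero

private lemma h6X : (6 * RatFunc.X - 1 : RatFunc ℚ) ≠ 0 := by
  have : (6 * RatFunc.X - 1 : RatFunc ℚ)
      = algebraMap (Polynomial ℚ) (RatFunc ℚ) (6 * Polynomial.X - 1) := by
    simp [map_sub, map_mul, map_ofNat, RatFunc.algebraMap_X]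
  rw [this]
  refine rf_ne _ fun h => ?_
  have := congrArg (Polynomial.eval 0) h
  simp at this

private lemma ha1 : (RatFunc.X ^ 2 - 6 * RatFunc.X + 1 : RatFunc ℚ) ≠ 0 := by
  have : (RatFunc.X ^ 2 - 6 * RatFunc.X + 1 : RatFunc ℚ)
      = algebraMap (Polynomial ℚ) (RatFunc ℚ) (Polynomial.X ^ 2 - 6 * Polynomial.X + 1) := by
    simp [map_add, map_sub, map_mul, map_pow, map_ofNat, RatFunc.algebraMap_X]
  rw [this]
  refine rf_ne _ fun h => ?_
  have := congrArg (Polynomial.eval 0) h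
  simp at this

open Classical in
/-- On `W6`, the point `(s²(6s-1), 0)` has order exactly `6` and `(0,0)` has order exactly `2`. -/
theorem W6_torsion_points :
    (∃ h : W6.Nonsingular (RatFunc.X ^ 2 * (6 * RatFunc.X - 1)) 0,
      addOrderOf (WeierstrassCurve.Affine.Point.some _ _ h) = 6) ∧
    ∃ h' : W6.Nonsingular 0 0, addOrderOf (WeierstrassCurve.Affine.Point.some _ _ h') = 2 := by
  set t : RatFunc ℚ := RatFunc.X with ht
  have ht2 : t ^ 2 ≠ 0 := pow_ne_zero 2 hX
  have ht4 : t ^ 4 ≠ 0 := pow_ne_zero 4 hX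
  -- nonsingularity of P = (t²(6t-1), 0)
  have ha1x : (t ^ 2 - 6 * t + 1) * (t ^ 2 * (6 * t - 1)) ≠ 0 :=
    mul_ne_zero ha1 (mul_ne_zero ht2 h6X)
  have hP : W6.Nonsingular (t ^ 2 * (6 * t - 1)) 0 := by
    rw [Affine.nonsingular_iff']
    refine ⟨(Affine.equation_iff' _ _).2 ?_, Or.inr ?_⟩
    · show (0:RatFunc ℚ) ^ 2 + W6.a₁ * _ * 0 + W6.a₃ * 0 - _ = 0
      simp only [W6, ← ht]
      ring
    · show 2 * 0 + W6.a₁ * (t ^ 2 * (6 * t - 1)) + W6.a₃ ≠ 0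
      simp only [W6, ← ht]
      simpa using ha1x
  -- nonsingularity of 2P = (t⁴, 0)
  have hP2 : W6.Nonsingular (t ^ 4) 0 := by
    rw [Affine.nonsingular_iff']
    refine ⟨(Affine.equation_iff' _ _).2 ?_, Or.inr ?_⟩
    · show (0:RatFunc ℚ) ^ 2 + W6.a₁ * _ * 0 + W6.a₃ * 0 - _ = 0
      simp only [W6, ← ht]
      ring
    · show 2 * 0 + W6.a₁ * t ^ 4 + W6.a₃ ≠ 0
      simp only [W6, ← ht]
      simpa using mul_ne_zero ha1 ht4
  -- nonsingularity of (0,0)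
  have hQ : W6.Nonsingular 0 0 := by
    rw [Affine.nonsingular_zero]
    refine ⟨rfl, Or.inr ?_⟩
    show (-RatFunc.X ^ 6 + 6 * RatFunc.X ^ 7 : RatFunc ℚ) ≠ 0
    have : (-RatFunc.X ^ 6 + 6 * RatFunc.X ^ 7 : RatFunc ℚ)
        = RatFunc.X ^ 6 * (6 * RatFunc.X - 1) := by ring
    rw [this]
    exact mul_ne_zero (pow_ne_zero 6 hX) h6X
  -- negY facts
  have hnegY : W6.negY (t ^ 2 * (6 * t - 1)) 0
      = -((t ^ 2 - 6 * t + 1) * (t ^ 2 * (6 * t - 1))) := by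
    simp only [Affine.negY, W6, ← ht]; ring
  have hy : (0 : RatFunc ℚ) ≠ W6.negY (t ^ 2 * (6 * t - 1)) 0 := by
    rw [hnegY]
    simpa using ha1x.symm
  -- doubling: P + P = (t⁴, 0)
  have hslope : W6.slope (t ^ 2 * (6 * t - 1)) (t ^ 2 * (6 * t - 1)) 0 0 = -t ^ 2 := by
    rw [Affine.slope_of_Y_ne rfl hy, hnegY]
    rw [div_eq_iff (by simpa using ha1x)]
    simp only [W6, ← ht]
    ring
  have hstepA : WeierstrassCurve.Affine.Point.some _ _ hP + WeierstrassCurve.Affine.Point.some _ _ hP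
      = WeierstrassCurve.Affine.Point.some _ _ hP2 := by
    rw [Affine.Point.add_self_of_Y_ne hy]
    refine some_eq_some _ _ ?_ ?_
    · rw [Affine.addX, hslope]
      simp only [W6, ← ht]
      ring
    · rw [Affine.addY, Affine.negY, Affine.negAddY, Affine.addX, hslope]
      simp only [W6, ← ht]
      ring
  -- addition: 2P + P = (0, 0)
  have hxne : (t ^ 4 : RatFunc ℚ) ≠ t ^ 2 * (6 * t - 1) := by
    intro h
    have h0 : t ^ 2 * (t ^ 2 - 6 * t + 1) = 0 := by linear_combination h
    exact ha1 ((mul_eq_zero.1 h0).resolve_left ht2)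
  have hslope2 : W6.slope (t ^ 4) (t ^ 2 * (6 * t - 1)) 0 0 = 0 := by
    rw [Affine.slope_of_X_ne hxne]
    simp
  have hstepB : WeierstrassCurve.Affine.Point.some _ _ hP2 + WeierstrassCurve.Affine.Point.some _ _ hP
      = WeierstrassCurve.Affine.Point.some _ _ hQ := by
    rw [Affine.Point.add_of_X_ne hxne]
    refine some_eq_some _ _ ?_ ?_
    · rw [Affine.addX, hslope2]
      simp only [W6, ← ht]
      ring
    · rw [Affine.addY, Affine.negY, Affine.negAddY, Affine.addX, hslope2]
      simp only [W6, ← ht]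
      ring
  -- (0,0) is 2-torsion
  have hQneg : (0 : RatFunc ℚ) = W6.negY 0 0 := by
    simp [Affine.negY, W6]
  have hstepC : WeierstrassCurve.Affine.Point.some _ _ hQ + WeierstrassCurve.Affine.Point.some _ _ hQ
      = 0 := Affine.Point.add_of_Y_eq rfl hQneg
  have hQne : WeierstrassCurve.Affine.Point.some _ _ hQ ≠ 0 := fun h => by
    simp at h
  have hP2ne : WeierstrassCurve.Affine.Point.some _ _ hP2 ≠ 0 := fun h => by
    simp at h
  set P := WeierstrassCurve.Affine.Point.some _ _ hP with hPdef
  have h2P : 2 • P = WeierstrassCurve.Affine.Point.some _ _ hP2 := by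
    rw [two_nsmul, hstepA]
  have h3P : 3 • P = WeierstrassCurve.Affine.Point.some _ _ hQ := by
    have : (3 : ℕ) = 2 + 1 := rfl
    rw [this, add_nsmul, one_nsmul, h2P, hstepB]
  have h6P : 6 • P = 0 := by
    have : (6 : ℕ) = 3 + 3 := rfl
    rw [this, add_nsmul, h3P, hstepC]
  constructor
  · refine ⟨hP, ?_⟩
    refine addOrderOf_eq_of_nsmul_and_div_prime_nsmul (by norm_num) h6P ?_
    intro p hp hdvd
    have hle : p ≤ 6 := Nat.le_of_dvd (by norm_num) hdvd
    have h2le : 2 ≤ p := hp.two_le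
    interval_cases p
    · exact fun h => hQne (h3P ▸ h)
    · exact fun h => hP2ne (h2P ▸ h)
    · exact absurd hdvd (by norm_num)
    · exact absurd hdvd (by norm_num)
    · exact absurd hp (by norm_num)
  · refine ⟨hQ, ?_⟩
    refine addOrderOf_eq_of_nsmul_and_div_prime_nsmul (by norm_num) (by rw [two_nsmul, hstepC]) ?_
    intro p hp hdvd
    have hle : p ≤ 2 := Nat.le_of_dvd (by norm_num) hdvd
    have h2le : 2 ≤ p := hp.two_le
    interval_cases p
    simpa using hQne
end

section
/- On the elliptic curve E over ℚ(σ) given by y² + (σ²-3σ+1)xy = x(x-1)(x + σ² - 3σ), the point ρ₆ = (-σ(σ-3), σ(σ-3)(σ²-3σ+1)) has order exactly 6, with 2ρ₆ = (1, -σ²+3σ-1), 3ρ₆ = (0,0), 4ρ₆ = (1,0), and 5ρ₆ = (-σ²+3σ, 0). -/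
open WeierstrassCurve

/-- The elliptic curve over `ℚ(σ)` given by
`y² + (σ²-3σ+1)xy = x(x-1)(x + σ² - 3σ) = x³ + (σ²-3σ-1)x² + (-σ²+3σ)x`. -/
noncomputable def W3 : WeierstrassCurve.Affine (RatFunc ℚ) where
  a₁ := RatFunc.X ^ 2 - 3 * RatFunc.X + 1
  a₂ := RatFunc.X ^ 2 - 3 * RatFunc.X - 1
  a₃ := 0
  a₄ := -RatFunc.X ^ 2 + 3 * RatFunc.X
  a₆ := 0

local notation "σ" => (RatFunc.X : RatFunc ℚ)

open Polynomial in
lemma W3aux_alg_ne_zero (p : ℚ[X]) (c : ℚ) (e : RatFunc ℚ) (h : p.eval c ≠ 0)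
    (he : algebraMap ℚ[X] (RatFunc ℚ) p = e) : e ≠ 0 := fun hz => by
  have hp : p = 0 :=
    (map_eq_zero_iff _ (IsFractionRing.injective ℚ[X] (RatFunc ℚ))).mp (by rw [he, hz])
  rw [hp] at h; simp at h

lemma W3aux_some_congr {F : Type*} [Field F] {W : WeierstrassCurve.Affine F}
    {x x' y y' : F} (hx : x = x') (hy : y = y') {h : W.Nonsingular x y}
    (h' : W.Nonsingular x' y') :
    WeierstrassCurve.Affine.Point.some _ _ h = WeierstrassCurve.Affine.Point.some _ _ h' := by
  subst hx; subst hy; rfl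

open Classical in
/-- The point `ρ₆ = (-σ(σ-3), σ(σ-3)(σ²-3σ+1))` on `W3` has order exactly 6, with the listed
multiples. -/
theorem W3_rho6_order_six :
    ∃ (h1 : W3.Nonsingular (-σ * (σ - 3)) (σ * (σ - 3) * (σ ^ 2 - 3 * σ + 1)))
      (h2 : W3.Nonsingular 1 (-σ ^ 2 + 3 * σ - 1))
      (h3 : W3.Nonsingular 0 0)
      (h4 : W3.Nonsingular 1 0)
      (h5 : W3.Nonsingular (-σ ^ 2 + 3 * σ) 0),
      addOrderOf (WeierstrassCurve.Affine.Point.some _ _ h1) = 6 ∧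
      2 • (WeierstrassCurve.Affine.Point.some _ _ h1) = .some _ _ h2 ∧
      3 • (WeierstrassCurve.Affine.Point.some _ _ h1) = .some _ _ h3 ∧
      4 • (WeierstrassCurve.Affine.Point.some _ _ h1) = .some _ _ h4 ∧
      5 • (WeierstrassCurve.Affine.Point.some _ _ h1) = .some _ _ h5 := by
  -- basic nonvanishing facts
  have hA : (σ ^ 2 - 3 * σ + 1 : RatFunc ℚ) ≠ 0 :=
    W3aux_alg_ne_zero (Polynomial.X ^ 2 - 3 * Polynomial.X + 1) 0 _
      (by norm_num) (by simp only [map_add, map_sub, map_mul, map_pow, map_one, map_ofNat, RatFunc.algebraMap_X])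
  have hB : (σ ^ 2 - 3 * σ : RatFunc ℚ) ≠ 0 :=
    W3aux_alg_ne_zero (Polynomial.X ^ 2 - 3 * Polynomial.X) 1 _
      (by norm_num) (by simp only [map_add, map_sub, map_mul, map_pow, map_one, map_ofNat, RatFunc.algebraMap_X])
  have hσ : (σ : RatFunc ℚ) ≠ 0 := RatFunc.X_ne_zero
  have hσ3 : (σ - 3 : RatFunc ℚ) ≠ 0 :=
    W3aux_alg_ne_zero (Polynomial.X - 3) 0 _ (by norm_num) (by simp only [map_add, map_sub, map_mul, map_pow, map_one, map_ofNat, RatFunc.algebraMap_X])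
  -- discriminant
  have hΔval : W3.Δ = (σ ^ 2 - 3 * σ) ^ 2 *
      (((σ ^ 2 - 3 * σ) ^ 2 + 6 * (σ ^ 2 - 3 * σ) - 3) ^ 2 + 64 * (σ ^ 2 - 3 * σ)) := by
    simp only [WeierstrassCurve.Δ, WeierstrassCurve.b₂, WeierstrassCurve.b₄,
      WeierstrassCurve.b₆, WeierstrassCurve.b₈, W3]
    ring
  have hΔ : W3.Δ ≠ 0 := by
    rw [hΔval]
    exact W3aux_alg_ne_zero
      ((Polynomial.X ^ 2 - 3 * Polynomial.X) ^ 2 *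
        (((Polynomial.X ^ 2 - 3 * Polynomial.X) ^ 2 + 6 * (Polynomial.X ^ 2 - 3 * Polynomial.X)
          - 3) ^ 2 + 64 * (Polynomial.X ^ 2 - 3 * Polynomial.X))) 1 _ (by norm_num)
      (by simp only [map_add, map_sub, map_mul, map_pow, map_one, map_ofNat, RatFunc.algebraMap_X])
  -- nonsingularity of the five points
  have h1 : W3.Nonsingular (-σ * (σ - 3)) (σ * (σ - 3) * (σ ^ 2 - 3 * σ + 1)) :=
    (W3.equation_iff_nonsingular_of_Δ_ne_zero hΔ).mp ((W3.equation_iff _ _).mpr (by simp only [W3]; ring))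
  have h2 : W3.Nonsingular 1 (-σ ^ 2 + 3 * σ - 1) :=
    (W3.equation_iff_nonsingular_of_Δ_ne_zero hΔ).mp ((W3.equation_iff _ _).mpr (by simp only [W3]; ring))
  have h3 : W3.Nonsingular 0 0 :=
    (W3.equation_iff_nonsingular_of_Δ_ne_zero hΔ).mp ((W3.equation_iff _ _).mpr (by simp only [W3]; ring))
  have h4 : W3.Nonsingular 1 0 :=
    (W3.equation_iff_nonsingular_of_Δ_ne_zero hΔ).mp ((W3.equation_iff _ _).mpr (by simp only [W3]; ring))
  have h5 : W3.Nonsingular (-σ ^ 2 + 3 * σ) 0 :=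
    (W3.equation_iff_nonsingular_of_Δ_ne_zero hΔ).mp ((W3.equation_iff _ _).mpr (by simp only [W3]; ring))
  set x₁ : RatFunc ℚ := -σ * (σ - 3) with hx₁def
  set y₁ : RatFunc ℚ := σ * (σ - 3) * (σ ^ 2 - 3 * σ + 1) with hy₁def
  have hy1ne : y₁ ≠ 0 := mul_ne_zero (mul_ne_zero hσ hσ3) hA
  have hneg1 : W3.negY x₁ y₁ = 0 := by
    simp only [Affine.negY, W3, hx₁def, hy₁def]; ring
  have hy11 : y₁ ≠ W3.negY x₁ y₁ := by rw [hneg1]; exact hy1ne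
  -- the doubling
  have hs2 : W3.slope x₁ x₁ y₁ y₁ = -(σ ^ 2 - 3 * σ) := by
    rw [Affine.slope_of_Y_ne rfl hy11, hneg1, sub_zero, div_eq_iff hy1ne]
    simp only [W3, hx₁def, hy₁def]; ring
  have s2 : 2 • (WeierstrassCurve.Affine.Point.some _ _ h1) = .some _ _ h2 := by
    rw [two_nsmul, Affine.Point.add_self_of_Y_ne hy11]
    refine W3aux_some_congr ?_ ?_ h2
    · rw [hs2]; simp only [Affine.addX, W3, hx₁def]; ring
    · rw [hs2]
      simp only [Affine.addY, Affine.negAddY, Affine.addX, Affine.negY, W3, hx₁def, hy₁def]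
      ring
  -- 2P + P = 3P
  have hx21 : (1 : RatFunc ℚ) ≠ x₁ := by
    rw [hx₁def]; intro h; apply hA; linear_combination h
  have hd21 : (1 : RatFunc ℚ) - x₁ ≠ 0 := sub_ne_zero.mpr hx21
  have hs3 : W3.slope 1 x₁ (-σ ^ 2 + 3 * σ - 1) y₁ = -(σ ^ 2 - 3 * σ + 1) := by
    rw [Affine.slope_of_X_ne hx21, div_eq_iff hd21, hx₁def, hy₁def]; ring
  have s3 : 3 • (WeierstrassCurve.Affine.Point.some _ _ h1) = .some _ _ h3 := by
    rw [show (3 : ℕ) = 2 + 1 by rfl, succ_nsmul, s2, Affine.Point.add_of_X_ne hx21]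
    refine W3aux_some_congr ?_ ?_ h3
    · rw [hs3]; simp only [Affine.addX, W3, hx₁def]; ring
    · rw [hs3]
      simp only [Affine.addY, Affine.negAddY, Affine.addX, Affine.negY, W3, hx₁def]
      ring
  -- 3P + P = 4P
  have hx31 : (0 : RatFunc ℚ) ≠ x₁ := by
    rw [hx₁def]; intro h; apply hB; linear_combination h
  have hd31 : (0 : RatFunc ℚ) - x₁ ≠ 0 := sub_ne_zero.mpr hx31
  have hs4 : W3.slope 0 x₁ 0 y₁ = -(σ ^ 2 - 3 * σ + 1) := by
    rw [Affine.slope_of_X_ne hx31, div_eq_iff hd31, hx₁def, hy₁def]; ring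
  have s4 : 4 • (WeierstrassCurve.Affine.Point.some _ _ h1) = .some _ _ h4 := by
    rw [show (4 : ℕ) = 3 + 1 by rfl, succ_nsmul, s3, Affine.Point.add_of_X_ne hx31]
    refine W3aux_some_congr ?_ ?_ h4
    · rw [hs4]; simp only [Affine.addX, W3, hx₁def]; ring
    · rw [hs4]
      simp only [Affine.addY, Affine.negAddY, Affine.addX, Affine.negY, W3, hx₁def]
      ring
  -- 4P + P = 5P
  have hs5 : W3.slope 1 x₁ 0 y₁ = -(σ ^ 2 - 3 * σ) := by
    rw [Affine.slope_of_X_ne hx21, div_eq_iff hd21, hx₁def, hy₁def]; ring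
  have s5 : 5 • (WeierstrassCurve.Affine.Point.some _ _ h1) = .some _ _ h5 := by
    rw [show (5 : ℕ) = 4 + 1 by rfl, succ_nsmul, s4, Affine.Point.add_of_X_ne hx21]
    refine W3aux_some_congr ?_ ?_ h5
    · rw [hs5]; simp only [Affine.addX, W3, hx₁def]; ring
    · rw [hs5]
      simp only [Affine.addY, Affine.negAddY, Affine.addX, Affine.negY, W3, hx₁def]
      ring
  -- 5P + P = 0
  have s6 : 6 • (WeierstrassCurve.Affine.Point.some _ _ h1) = 0 := by
    rw [show (6 : ℕ) = 5 + 1 by rfl, succ_nsmul, s5,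
      Affine.Point.add_of_Y_eq (by rw [hx₁def]; ring) (by rw [hneg1])]
  refine ⟨h1, h2, h3, h4, h5, ?_, s2, s3, s4, s5⟩
  refine addOrderOf_eq_of_nsmul_and_div_prime_nsmul (by norm_num) s6 ?_
  intro p hp hdvd
  have hp2 : 2 ≤ p := hp.two_le
  have hp6 : p ≤ 6 := Nat.le_of_dvd (by norm_num) hdvd
  interval_cases p
  · rw [show (6 / 2 : ℕ) = 3 by rfl, s3]; exact Affine.Point.some_ne_zero _
  · rw [show (6 / 3 : ℕ) = 2 by rfl, s2]; exact Affine.Point.some_ne_zero _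
  · exact absurd hdvd (by norm_num)
  · exact absurd hdvd (by norm_num)
  · rw [show (6 / 6 : ℕ) = 1 by rfl, one_nsmul]; exact Affine.Point.some_ne_zero _
end

section
/- On the elliptic curve E over ℚ(σ) given by y² + (σ²-18σ+1)xy = x(x-1)(x + σ² - 18σ), the point ρ₆ = (-σ(σ-18), σ(σ-18)(σ²-18σ+1)) has order exactly 6, with 2ρ₆ = (1, -σ²+18σ-1), 3ρ₆ = (0,0), 4ρ₆ = (1,0), and 5ρ₆ = (-σ²+18σ, 0). -/
open WeierstrassCurve

/-- The elliptic curve over `ℚ(σ)` given by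
`y² + (σ²-18σ+1)xy = x(x-1)(x + σ² - 18σ) = x³ + (σ²-18σ-1)x² + (-σ²+18σ)x`. -/
noncomputable def W18 : WeierstrassCurve.Affine (RatFunc ℚ) where
  a₁ := RatFunc.X ^ 2 - 18 * RatFunc.X + 1
  a₂ := RatFunc.X ^ 2 - 18 * RatFunc.X - 1
  a₃ := 0
  a₄ := -RatFunc.X ^ 2 + 18 * RatFunc.X
  a₆ := 0

local notation "σ" => (RatFunc.X : RatFunc ℚ)

private lemma some_congr' {F : Type*} [Field F] {W : WeierstrassCurve.Affine F}
    {x₁ y₁ x₂ y₂ : F} (hx : x₁ = x₂) (hy : y₁ = y₂) {h₁ : W.Nonsingular x₁ y₁}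
    {h₂ : W.Nonsingular x₂ y₂} :
    WeierstrassCurve.Affine.Point.some _ _ h₁ = WeierstrassCurve.Affine.Point.some _ _ h₂ := by
  subst hx; subst hy; rfl

private lemma hC18 : (σ ^ 2 - 18 * σ + 1 : RatFunc ℚ) ≠ 0 := by
  have : (σ ^ 2 - 18 * σ + 1 : RatFunc ℚ) =
      algebraMap (Polynomial ℚ) (RatFunc ℚ) (Polynomial.X ^ 2 - 18 * Polynomial.X + 1) := by
    simp [map_add, map_sub, map_mul, map_pow, map_ofNat, RatFunc.algebraMap_X]
  rw [this]
  refine RatFunc.algebraMap_ne_zero fun h => ?_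
  have := congrArg (Polynomial.eval 0) h
  simp at this

private lemma hB18 : (σ - 18 : RatFunc ℚ) ≠ 0 := by
  have : (σ - 18 : RatFunc ℚ) =
      algebraMap (Polynomial ℚ) (RatFunc ℚ) (Polynomial.X - 18) := by
    simp [map_sub, map_ofNat, RatFunc.algebraMap_X]
  rw [this]
  refine RatFunc.algebraMap_ne_zero fun h => ?_
  have := congrArg (Polynomial.eval 0) h
  simp at this

private lemma ht18 : (σ * (σ - 18) : RatFunc ℚ) ≠ 0 :=
  mul_ne_zero RatFunc.X_ne_zero hB18

private lemma hne18 : (σ * (σ - 18) * (σ ^ 2 - 18 * σ + 1) : RatFunc ℚ) ≠ 0 :=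
  mul_ne_zero ht18 hC18

open Classical in
/-- The point `ρ₆ = (-σ(σ-18), σ(σ-18)(σ²-18σ+1))` on `W18` has order exactly 6, with the listed
multiples. -/
theorem W18_rho6_order_six :
    ∃ (h1 : W18.Nonsingular (-σ * (σ - 18)) (σ * (σ - 18) * (σ ^ 2 - 18 * σ + 1)))
      (h2 : W18.Nonsingular 1 (-σ ^ 2 + 18 * σ - 1))
      (h3 : W18.Nonsingular 0 0)
      (h4 : W18.Nonsingular 1 0)
      (h5 : W18.Nonsingular (-σ ^ 2 + 18 * σ) 0),
      addOrderOf (WeierstrassCurve.Affine.Point.some _ _ h1) = 6 ∧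
      2 • (WeierstrassCurve.Affine.Point.some _ _ h1) = .some _ _ h2 ∧
      3 • (WeierstrassCurve.Affine.Point.some _ _ h1) = .some _ _ h3 ∧
      4 • (WeierstrassCurve.Affine.Point.some _ _ h1) = .some _ _ h4 ∧
      5 • (WeierstrassCurve.Affine.Point.some _ _ h1) = .some _ _ h5 := by
  have h1 : W18.Nonsingular (-σ * (σ - 18)) (σ * (σ - 18) * (σ ^ 2 - 18 * σ + 1)) := by
    rw [Affine.nonsingular_iff, Affine.equation_iff]
    refine ⟨by simp only [W18]; ring, Or.inr ?_⟩
    simp only [Affine.negY, W18]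
    intro h
    exact hne18 (by linear_combination h)
  have h2 : W18.Nonsingular 1 (-σ ^ 2 + 18 * σ - 1) := by
    rw [Affine.nonsingular_iff, Affine.equation_iff]
    refine ⟨by simp only [W18]; ring, Or.inr ?_⟩
    simp only [Affine.negY, W18]
    intro h
    exact hC18 (by linear_combination -h)
  have h3 : W18.Nonsingular 0 0 := by
    rw [Affine.nonsingular_iff, Affine.equation_iff]
    refine ⟨by simp only [W18]; ring, Or.inl ?_⟩
    simp only [Affine.negY, W18]
    intro h
    exact ht18 (by linear_combination h)
  have h4 : W18.Nonsingular 1 0 := by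
    rw [Affine.nonsingular_iff, Affine.equation_iff]
    refine ⟨by simp only [W18]; ring, Or.inr ?_⟩
    simp only [Affine.negY, W18]
    intro h
    exact hC18 (by linear_combination h)
  have h5 : W18.Nonsingular (-σ ^ 2 + 18 * σ) 0 := by
    rw [Affine.nonsingular_iff, Affine.equation_iff]
    refine ⟨by simp only [W18]; ring, Or.inr ?_⟩
    simp only [Affine.negY, W18]
    intro h
    exact hne18 (by linear_combination -h)
  -- doubling
  have hy1 : (σ * (σ - 18) * (σ ^ 2 - 18 * σ + 1) : RatFunc ℚ) ≠
      W18.negY (-σ * (σ - 18)) (σ * (σ - 18) * (σ ^ 2 - 18 * σ + 1)) := by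
    simp only [Affine.negY, W18]
    intro h
    exact hne18 (by linear_combination h)
  have hL2 : W18.slope (-σ * (σ - 18)) (-σ * (σ - 18))
      (σ * (σ - 18) * (σ ^ 2 - 18 * σ + 1)) (σ * (σ - 18) * (σ ^ 2 - 18 * σ + 1)) =
      -σ ^ 2 + 18 * σ := by
    rw [Affine.slope_of_Y_ne rfl hy1]
    simp only [Affine.negY, W18]
    rw [div_eq_iff (fun h => hne18 (by linear_combination h))]
    ring
  have e2 : (2 : ℕ) • (WeierstrassCurve.Affine.Point.some _ _ h1) =
      WeierstrassCurve.Affine.Point.some _ _ h2 := by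
    rw [two_nsmul, Affine.Point.add_self_of_Y_ne hy1]
    refine some_congr' ?_ ?_
    · rw [Affine.addX, hL2]; simp only [W18]; ring
    · rw [Affine.addY, Affine.negAddY, Affine.negY, Affine.addX, hL2]
      simp only [W18]; ring
  -- 2P + P = 3P
  have hx21 : (1 : RatFunc ℚ) ≠ -σ * (σ - 18) := by
    intro h; exact hC18 (by linear_combination h)
  have hL3 : W18.slope 1 (-σ * (σ - 18)) (-σ ^ 2 + 18 * σ - 1)
      (σ * (σ - 18) * (σ ^ 2 - 18 * σ + 1)) = -σ ^ 2 + 18 * σ - 1 := by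
    rw [Affine.slope_of_X_ne hx21]
    rw [div_eq_iff (fun h => hC18 (by linear_combination h))]
    ring
  have e3 : (3 : ℕ) • (WeierstrassCurve.Affine.Point.some _ _ h1) =
      WeierstrassCurve.Affine.Point.some _ _ h3 := by
    rw [show (3 : ℕ) = 2 + 1 from rfl, add_nsmul, one_nsmul, e2,
      Affine.Point.add_of_X_ne hx21]
    refine some_congr' ?_ ?_
    · rw [Affine.addX, hL3]; simp only [W18]; ring
    · rw [Affine.addY, Affine.negAddY, Affine.negY, Affine.addX, hL3]
      simp only [W18]; ring
  -- 3P + P = 4P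
  have hx31 : (0 : RatFunc ℚ) ≠ -σ * (σ - 18) := by
    intro h; exact ht18 (by linear_combination h)
  have hL4 : W18.slope 0 (-σ * (σ - 18)) 0 (σ * (σ - 18) * (σ ^ 2 - 18 * σ + 1)) =
      -σ ^ 2 + 18 * σ - 1 := by
    rw [Affine.slope_of_X_ne hx31]
    rw [div_eq_iff (fun h => ht18 (by linear_combination h))]
    ring
  have e4 : (4 : ℕ) • (WeierstrassCurve.Affine.Point.some _ _ h1) =
      WeierstrassCurve.Affine.Point.some _ _ h4 := by
    rw [show (4 : ℕ) = 3 + 1 from rfl, add_nsmul, one_nsmul, e3,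
      Affine.Point.add_of_X_ne hx31]
    refine some_congr' ?_ ?_
    · rw [Affine.addX, hL4]; simp only [W18]; ring
    · rw [Affine.addY, Affine.negAddY, Affine.negY, Affine.addX, hL4]
      simp only [W18]; ring
  -- 4P + P = 5P
  have hL5 : W18.slope 1 (-σ * (σ - 18)) 0 (σ * (σ - 18) * (σ ^ 2 - 18 * σ + 1)) =
      -σ ^ 2 + 18 * σ := by
    rw [Affine.slope_of_X_ne hx21]
    rw [div_eq_iff (fun h => hC18 (by linear_combination h))]
    ring
  have e5 : (5 : ℕ) • (WeierstrassCurve.Affine.Point.some _ _ h1) =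
      WeierstrassCurve.Affine.Point.some _ _ h5 := by
    rw [show (5 : ℕ) = 4 + 1 from rfl, add_nsmul, one_nsmul, e4,
      Affine.Point.add_of_X_ne hx21]
    refine some_congr' ?_ ?_
    · rw [Affine.addX, hL5]; simp only [W18]; ring
    · rw [Affine.addY, Affine.negAddY, Affine.negY, Affine.addX, hL5]
      simp only [W18]; ring
  -- 5P + P = 0
  have e6 : (6 : ℕ) • (WeierstrassCurve.Affine.Point.some _ _ h1) = 0 := by
    rw [show (6 : ℕ) = 5 + 1 from rfl, add_nsmul, one_nsmul, e5,
      Affine.Point.add_of_Y_eq (by ring) ?_]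
    simp only [Affine.negY, W18]
    ring
  refine ⟨h1, h2, h3, h4, h5, ?_, e2, e3, e4, e5⟩
  refine addOrderOf_eq_of_nsmul_and_div_prime_nsmul (by norm_num) e6 ?_
  intro p hp hpd
  have hple : p ≤ 6 := Nat.le_of_dvd (by norm_num) hpd
  have hp2 : 2 ≤ p := hp.two_le
  interval_cases p
  · rw [show (6 / 2 : ℕ) = 3 from rfl, e3]
    exact Affine.Point.some_ne_zero h3
  · rw [show (6 / 3 : ℕ) = 2 from rfl, e2]
    exact Affine.Point.some_ne_zero h2
  · exact absurd hpd (by norm_num)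
  · exact absurd hpd (by norm_num)
  · exact absurd hp (by norm_num)
end

section
/- Let E: y² = x(x² + ax + b) be an elliptic curve over a field K of characteristic ≠ 2 with a² - 4b not a square in K*. Let Q = (x₀, y₀) ∈ E(K) with x₀ ≠ 0. Then Q = 2P for some P ∈ E(K) if and only if x₀ is a square in K*, say x₀ = r², and at least one of q_± = 2x₀ + a ± 2y₀/r is a square in K*. -/
open WeierstrassCurve

private lemma halving_some_eq_some {K : Type*} [Field K] {W : WeierstrassCurve.Affine K}
    {x1 y1 x2 y2 : K} (hx : x1 = x2) (hy : y1 = y2)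
    (h1 : W.Nonsingular x1 y1) (h2 : W.Nonsingular x2 y2) :
    Affine.Point.some x1 y1 h1 = Affine.Point.some x2 y2 h2 := by subst hx; subst hy; rfl

open Classical in
/-- Halving criterion: on `E : y² = x(x² + ax + b)` over a field `K` with `char K ≠ 2`,
`b(a²-4b) ≠ 0` and `a² - 4b` not a square in `K`, a point `Q = (x₀, y₀)` with `x₀ ≠ 0`
is `2P` for some `P ∈ E(K)` iff `x₀ = r²` is a square and one of `q± = 2x₀ + a ± 2y₀/r`
is a square in `K`. -/
theorem halving_criterion {K : Type*} [Field K] (hchar : (2 : K) ≠ 0) (a b : K)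
    (hb : b * (a ^ 2 - 4 * b) ≠ 0) (hd : ¬ IsSquare (a ^ 2 - 4 * b))
    (W : WeierstrassCurve.Affine K)
    (hW : W = { a₁ := 0, a₂ := a, a₃ := 0, a₄ := b, a₆ := 0 })
    (x₀ y₀ : K) (hx₀ : x₀ ≠ 0) (hQ : W.Nonsingular x₀ y₀) :
    (∃ P : W.Point, 2 • P = WeierstrassCurve.Affine.Point.some x₀ y₀ hQ) ↔
      ∃ r : K, x₀ = r ^ 2 ∧
        (IsSquare (2 * x₀ + a + 2 * y₀ / r) ∨ IsSquare (2 * x₀ + a - 2 * y₀ / r)) := by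
  have ha1 : W.a₁ = 0 := by rw [hW]
  have ha2 : W.a₂ = a := by rw [hW]
  have ha3 : W.a₃ = 0 := by rw [hW]
  have ha4 : W.a₄ = b := by rw [hW]
  have ha6 : W.a₆ = 0 := by rw [hW]
  have hb0 : b ≠ 0 := left_ne_zero_of_mul hb
  have hd0 : a ^ 2 - 4 * b ≠ 0 := right_ne_zero_of_mul hb
  have hneg : ∀ u v : K, W.negY u v = -v := fun u v => by
    rw [Affine.negY, ha1, ha3]; ring
  have hΔ : W.Δ ≠ 0 := by
    have h : W.Δ = 2 ^ 4 * (b * (b * (a ^ 2 - 4 * b))) := by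
      simp only [WeierstrassCurve.Δ, WeierstrassCurve.b₂, WeierstrassCurve.b₄,
        WeierstrassCurve.b₆, WeierstrassCurve.b₈, ha1, ha2, ha3, ha4, ha6]
      ring
    rw [h]
    exact mul_ne_zero (pow_ne_zero _ hchar) (mul_ne_zero hb0 hb)
  have hQeq : y₀ ^ 2 = x₀ ^ 3 + a * x₀ ^ 2 + b * x₀ := by
    have h := hQ.1
    rw [Affine.equation_iff, ha1, ha2, ha3, ha4, ha6] at h
    linear_combination h
  constructor
  · rintro ⟨P, hP⟩
    cases P with
    | zero =>
      rw [← Affine.Point.zero_def, smul_zero] at hP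
      exact absurd hP.symm (Affine.Point.some_ne_zero hQ)
    | @some x y hxy =>
      by_cases hy : y = W.negY x y
      · rw [two_nsmul, Affine.Point.add_self_of_Y_eq hy] at hP
        exact absurd hP.symm (Affine.Point.some_ne_zero hQ)
      · rw [two_nsmul, Affine.Point.add_self_of_Y_ne hy, Affine.Point.some.injEq] at hP
        obtain ⟨hXadd, hYadd⟩ := hP
        have hy0 : y ≠ 0 := fun h0 => hy (by rw [hneg, h0, neg_zero])
        have hcx : y ^ 2 = x ^ 3 + a * x ^ 2 + b * x := by
          have h := hxy.1
          rw [Affine.equation_iff, ha1, ha2, ha3, ha4, ha6] at h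
          linear_combination h
        have hx0 : x ≠ 0 := by
          intro h0
          apply hy0
          rw [h0] at hcx
          have h1 : y ^ 2 = 0 := by linear_combination hcx
          exact sq_eq_zero_iff.mp h1
        have hsl : W.slope x x y y = (3*x^2+2*a*x+b)/(2*y) := by
          rw [Affine.slope_of_Y_ne rfl hy, hneg, ha1, ha2, ha4]
          congr 1 <;> ring
        have hX : x₀ = ((3*x^2+2*a*x+b)/(2*y))^2 - a - 2*x := by
          rw [← hXadd, Affine.addX, hsl, ha1, ha2]; ring
        have hY : y₀ = -(((3*x^2+2*a*x+b)/(2*y))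
            * (((3*x^2+2*a*x+b)/(2*y))^2 - a - 2*x - x) + y) := by
          rw [← hYadd, Affine.addY, Affine.negAddY, Affine.negY, Affine.addX,
            hsl, ha1, ha2, ha3]
          ring
        have hXr : x₀ = ((x^2-b)/(2*y))^2 := by
          rw [hX]
          field_simp [hy0, hchar]
          linear_combination (-4*a-8*x)*hcx
        refine ⟨(x^2-b)/(2*y), hXr, Or.inl ⟨y/x, ?_⟩⟩
        have hx2b : x^2 - b ≠ 0 := by
          intro h0
          apply hx₀
          rw [hXr, h0, zero_div]
          ring
        have h2y : (2*y) ≠ 0 := mul_ne_zero hchar hy0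
        rw [hX, hY]
        field_simp [hy0, hx0, hx2b, hchar]
        linear_combination (x^2*(-(2*a+8*x)*(x^2-b) + (3*x^2+2*a*x+b)*(4*a+12*x))
          + (-8*x^2 - 2*(x^2-b))*(y^2 + x^3+a*x^2+b*x)) * hcx
  · rintro ⟨r, hr, hq⟩
    have key : ∀ r t : K, x₀ = r ^ 2 → 2 * x₀ + a + 2 * y₀ / r = t * t →
        ∃ P : W.Point, 2 • P = Affine.Point.some x₀ y₀ hQ := by
      clear hr hq
      intro r t hr ht
      subst hr
      have hrr : r ≠ 0 := fun h0 => hx₀ (by rw [h0]; ring)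
      have hy2 : y₀ * 2 = t*t*r - 2*r^3 - a*r := by
        field_simp [hrr] at ht
        linear_combination ht
      have ht0 : t ≠ 0 := by
        intro h0
        apply hd0
        rw [h0] at hy2
        have h5 : (a^2 - 4*b) * r^2 = 0 := by
          linear_combination (a*r + 2*r^3 - 2*y₀)*hy2 + (4:K)*hQeq
        rcases mul_eq_zero.mp h5 with h|h
        · exact h
        · exact absurd h (pow_ne_zero 2 hrr)
      have h4 : (4:K) ≠ 0 := by
        have h := mul_ne_zero hchar hchar
        norm_num at h
        exact h
      have hbe : b * 4 = (t*t-a)^2 - 4*(r^2*(t*t)) := by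
        have h6 : (b * 4 - ((t*t-a)^2 - 4*(r^2*(t*t)))) * r^2 = 0 := by
          linear_combination (2*y₀ + (t*t*r - 2*r^3 - a*r))*hy2 - (4:K)*hQeq
        rcases mul_eq_zero.mp h6 with h7|h7
        · linear_combination h7
        · exact absurd h7 (pow_ne_zero 2 hrr)
      set X : K := (t*t - a)/2 + r*t with hXdef
      have h2X : 2*X = t*t - a + 2*(r*t) := by
        rw [hXdef, mul_add, mul_div_cancel₀ _ hchar]
      have hX0 : X ≠ 0 := by
        intro h0
        apply hb0
        rw [h0] at h2X
        have h7 : b * 4 = 0 := by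
          linear_combination hbe - (t*t - a - 2*(r*t))*h2X
        rcases mul_eq_zero.mp h7 with h8|h8
        · exact h8
        · exact absurd h8 h4
      have hyy0 : t*X ≠ 0 := mul_ne_zero ht0 hX0
      have heq : W.Equation X (t*X) := by
        rw [Affine.equation_iff, ha1, ha2, ha3, ha4, ha6]
        apply mul_left_cancel₀ (pow_ne_zero 2 hchar)
        linear_combination (X*t^2 - 2*X*r*t - 2*X^2 - a*X)*h2X + (-X)*hbe
      have hP : W.Nonsingular X (t*X) := (W.equation_iff_nonsingular_of_Δ_ne_zero hΔ).mp heq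
      have hyne : t*X ≠ W.negY X (t*X) := by
        rw [hneg]
        intro h0
        apply hyy0
        have h1 : 2*(t*X) = 0 := by linear_combination h0
        rcases mul_eq_zero.mp h1 with h2|h2
        · exact absurd h2 hchar
        · exact h2
      refine ⟨Affine.Point.some _ _ hP, ?_⟩
      rw [two_nsmul, Affine.Point.add_self_of_Y_ne hyne]
      have hsl : W.slope X X (t*X) (t*X) = (3*X^2+2*a*X+b)/(2*(t*X)) := by
        rw [Affine.slope_of_Y_ne rfl hyne, hneg, ha1, ha2, ha4]
        congr 1 <;> ring
      have hXeq : W.addX X X (W.slope X X (t*X) (t*X)) = r^2 := by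
        rw [Affine.addX, hsl, ha1, ha2]
        field_simp [ht0, hX0, hchar]
        apply mul_left_cancel₀ (pow_ne_zero 4 hchar)
        linear_combination (-t^6 + 2*r*t^5 + 4*r^2*t^4 - 8*r^3*t^3 - 2*X*t^4 + 8*X*r*t^3
          - 8*X*r^2*t^2 - 28*X^2*t^2 + 72*X^2*r*t + 72*X^3 + 3*a*t^4 - 4*a*r*t^3
          - 4*a*r^2*t^2 - 12*a*X*t^2 + 24*a*X*r*t + 60*a*X^2 - 3*a^2*t^2 + 2*a^2*r*t
          + 14*a^2*X + a^3)*h2X + (t^4 - 4*r^2*t^2 + 24*X^2 + 4*b - 2*a*t^2 + 16*a*X + a^2)*hbe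
      have hYeq : W.addY X X (t*X) (W.slope X X (t*X) (t*X)) = y₀ := by
        rw [Affine.addY, Affine.negAddY, hXeq, hneg, hsl]
        field_simp [ht0, hX0, hchar]
        apply mul_left_cancel₀ (pow_ne_zero 2 hchar)
        linear_combination (r^2*t^2 - 2*r^3*t - X*t^2 + 6*X*r*t - 6*X*r^2 + 6*X^2 - a*r^2
          + a*X)*h2X + (-r^2 + X)*hbe + (-4*X*t)*hy2
      exact halving_some_eq_some hXeq hYeq _ hQ
    obtain (⟨t, ht⟩|⟨t, ht⟩) := hq
    · exact key r t hr ht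
    · refine key (-r) t (by rw [hr]; ring) ?_
      rw [div_neg]
      linear_combination ht
end
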